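/- arXiv:1406.1840 — 6 statements merged into one kernel-verified Lean document; each statement's English description precedes it below -/
import Mathlib

section
/- Let g be an H-type Lie algebra with center z. If X ∈ z⊥ has ‖X‖ = 1, then ad_X maps (ker ad_X)⊥ isometrically onto z. -/
open scoped RealInnerProductSpace

theorem stmt2 {g : Type*} [NormedAddCommGroup g] [InnerProductSpace ℝ g]
    [FiniteDimensional ℝ g]
    (bracket : g →ₗ[ℝ] g →ₗ[ℝ] g)
    (hanti : ∀ X Y : g, bracket X Y = - bracket Y X)
    (hjacobi : ∀ X Y Z : g,
      bracket X (bracket Y Z) + bracket Y (bracket Z X) + bracket Z (bracket X Y) = 0)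
    (z : Submodule ℝ g)
    (hz : ∀ Z : g, Z ∈ z ↔ ∀ Y : g, bracket Z Y = 0)
    (J : g → g →ₗ[ℝ] g)
    (hJdef : ∀ Z ∈ z, ∀ X ∈ zᗮ, ∀ Y ∈ zᗮ, ⟪J Z X, Y⟫ = ⟪Z, bracket X Y⟫)
    (hJmem : ∀ Z ∈ z, ∀ X ∈ zᗮ, J Z X ∈ zᗮ)
    (hJorth : ∀ Z ∈ z, ‖Z‖ = 1 → ∀ X ∈ zᗮ, ‖J Z X‖ = ‖X‖)
    (hbz : ∀ X ∈ zᗮ, ∀ Y ∈ zᗮ, bracket X Y ∈ z)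
    (hspan : ∀ W ∈ z,
      W ∈ Submodule.span ℝ {w : g | ∃ X ∈ zᗮ, ∃ Y ∈ zᗮ, w = bracket X Y}) :
    ∀ X ∈ zᗮ, ‖X‖ = 1 →
      (∀ Y ∈ (LinearMap.ker (bracket X))ᗮ, ‖bracket X Y‖ = ‖Y‖) ∧
      Submodule.map (bracket X) (LinearMap.ker (bracket X))ᗮ = z := by
  intro X hX hX1
  -- z ⊆ ker (ad X)
  have hzker : z ≤ LinearMap.ker (bracket X) := by
    intro Z hZ
    simp only [LinearMap.mem_ker]
    rw [hanti, (hz Z).mp hZ X, neg_zero]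
  have hker_perp : (LinearMap.ker (bracket X))ᗮ ≤ zᗮ := Submodule.orthogonal_le hzker
  -- uniqueness lemmas
  have uniqP : ∀ D ∈ zᗮ, (∀ Y ∈ zᗮ, ⟪D, Y⟫ = 0) → D = 0 := by
    intro D hD h
    exact inner_self_eq_zero.mp (h D hD)
  have uniqZ : ∀ D ∈ z, (∀ W ∈ z, ⟪W, D⟫ = 0) → D = 0 := by
    intro D hD h
    exact inner_self_eq_zero.mp (h D hD)
  -- homogeneity of J in Z
  have hsmul : ∀ Z ∈ z, ∀ c : ℝ, J (c • Z) X = c • (J Z X) := by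
    intro Z hZ c
    have h1 : J (c • Z) X ∈ zᗮ := hJmem _ (z.smul_mem c hZ) X hX
    have h2 : c • (J Z X) ∈ zᗮ := Submodule.smul_mem _ c (hJmem Z hZ X hX)
    have h3 := uniqP (J (c • Z) X - c • (J Z X)) (Submodule.sub_mem _ h1 h2) ?_
    · exact sub_eq_zero.mp h3
    intro Y hY
    rw [inner_sub_left, hJdef _ (z.smul_mem c hZ) X hX Y hY, real_inner_smul_left,
      real_inner_smul_left, hJdef Z hZ X hX Y hY, sub_self]
  -- additivity of J in Z
  have hadd : ∀ Z ∈ z, ∀ W ∈ z, J (Z + W) X = J Z X + J W X := by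
    intro Z hZ W hW
    have h1 : J (Z + W) X ∈ zᗮ := hJmem _ (z.add_mem hZ hW) X hX
    have h2 : J Z X + J W X ∈ zᗮ :=
      Submodule.add_mem _ (hJmem Z hZ X hX) (hJmem W hW X hX)
    have h3 := uniqP (J (Z + W) X - (J Z X + J W X)) (Submodule.sub_mem _ h1 h2) ?_
    · exact sub_eq_zero.mp h3
    intro Y hY
    rw [inner_sub_left, hJdef _ (z.add_mem hZ hW) X hX Y hY, inner_add_left,
      inner_add_left, hJdef Z hZ X hX Y hY, hJdef W hW X hX Y hY, sub_self]
  -- norm of J W X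
  have hnorm : ∀ W ∈ z, ‖J W X‖ = ‖W‖ := by
    intro W hW
    by_cases hW0 : W = 0
    · subst hW0
      have : J ((0:ℝ) • (0:g)) X = (0:ℝ) • (J 0 X) := hsmul 0 (z.zero_mem) 0
      simp at this
      simp [this]
    · have hWn : ‖W‖ ≠ 0 := norm_ne_zero_iff.mpr hW0
      have hu : (‖W‖⁻¹ • W) ∈ z := z.smul_mem _ hW
      have hu1 : ‖‖W‖⁻¹ • W‖ = 1 := by
        rw [norm_smul, norm_inv, norm_norm, inv_mul_cancel₀ hWn]
      have := hJorth _ hu hu1 X hX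
      have hW' : J W X = ‖W‖ • J (‖W‖⁻¹ • W) X := by
        rw [← hsmul _ hu ‖W‖, smul_smul, mul_inv_cancel₀ hWn, one_smul]
      rw [hW', norm_smul, this, norm_norm, hX1, mul_one]
  -- inner products of J W X
  have hinner : ∀ W ∈ z, ∀ Z ∈ z, ⟪J W X, J Z X⟫ = ⟪W, Z⟫ := by
    intro W hW Z hZ
    have h1 : ‖J W X + J Z X‖ = ‖W + Z‖ := by
      rw [← hadd W hW Z hZ]; exact hnorm _ (z.add_mem hW hZ)
    have e1 := norm_add_sq_real (J W X) (J Z X)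
    have e2 := norm_add_sq_real W Z
    rw [h1, hnorm W hW, hnorm Z hZ] at e1
    rw [e1] at e2
    linarith
  -- bracket X (J Z X) = Z
  have hbJ : ∀ Z ∈ z, bracket X (J Z X) = Z := by
    intro Z hZ
    have hm : bracket X (J Z X) ∈ z := hbz X hX _ (hJmem Z hZ X hX)
    have h3 := uniqZ (bracket X (J Z X) - Z) (Submodule.sub_mem _ hm hZ) ?_
    · exact sub_eq_zero.mp h3
    intro W hW
    rw [inner_sub_right, ← hJdef W hW X hX _ (hJmem Z hZ X hX), hinner W hW Z hZ, sub_self]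
  -- J Z X ∈ (ker ad X)ᗮ
  have hJperp : ∀ Z ∈ z, J Z X ∈ (LinearMap.ker (bracket X))ᗮ := by
    intro Z hZ
    rw [Submodule.mem_orthogonal]
    intro K hK
    have hKk : bracket X K = 0 := LinearMap.mem_ker.mp hK
    -- decompose K
    set Kz : g := (z.orthogonalProjectionOnto K : g) with hKzdef
    have hKzm : Kz ∈ z := (z.orthogonalProjectionOnto K).2
    have hKpm : K - Kz ∈ zᗮ := z.sub_starProjection_mem_orthogonal K
    have hbKz : bracket X Kz = 0 := by
      rw [hanti, (hz Kz).mp hKzm X, neg_zero]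
    have hbKp : bracket X (K - Kz) = 0 := by
      rw [map_sub, hKk, hbKz, sub_zero]
    have h1 : ⟪J Z X, K - Kz⟫ = 0 := by
      rw [hJdef Z hZ X hX _ hKpm, hbKp, inner_zero_right]
    have h2 : ⟪J Z X, Kz⟫ = 0 := by
      rw [real_inner_comm]
      exact (Submodule.mem_orthogonal z (J Z X)).mp (hJmem Z hZ X hX) Kz hKzm
    have : ⟪J Z X, K⟫ = 0 := by
      have := h1
      rw [inner_sub_right, h2, sub_zero] at this
      exact this
    rw [real_inner_comm]; exact this
  -- every Y in (ker ad X)ᗮ is J W X with W = bracket X Y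
  have hrep : ∀ Y ∈ (LinearMap.ker (bracket X))ᗮ, Y = J (bracket X Y) X := by
    intro Y hY
    have hYz : Y ∈ zᗮ := hker_perp hY
    have hWz : bracket X Y ∈ z := hbz X hX Y hYz
    have hd1 : Y - J (bracket X Y) X ∈ LinearMap.ker (bracket X) := by
      rw [LinearMap.mem_ker, map_sub, hbJ _ hWz, sub_self]
    have hd2 : Y - J (bracket X Y) X ∈ (LinearMap.ker (bracket X))ᗮ :=
      Submodule.sub_mem _ hY (hJperp _ hWz)
    have : Y - J (bracket X Y) X = 0 := by
      have := (Submodule.mem_orthogonal _ _).mp hd2 _ hd1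
      exact inner_self_eq_zero.mp this
    exact (sub_eq_zero.mp this)
  constructor
  · intro Y hY
    have hYz : Y ∈ zᗮ := hker_perp hY
    have hWz : bracket X Y ∈ z := hbz X hX Y hYz
    conv_rhs => rw [hrep Y hY]
    rw [hnorm _ hWz]
  · apply le_antisymm
    · rintro w ⟨Y, hY, rfl⟩
      exact hbz X hX Y (hker_perp hY)
    · intro Z hZ
      exact ⟨J Z X, hJperp Z hZ, hbJ Z hZ⟩
end

section
/- Let g be an H-type Lie algebra with center z. Then dim z⊥ is even and dim z⊥ ≥ dim z + 1. -/
open scoped RealInnerProductSpace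

theorem stmt3 {g : Type*} [NormedAddCommGroup g] [InnerProductSpace ℝ g]
    [FiniteDimensional ℝ g] [Nontrivial g]
    (bracket : g →ₗ[ℝ] g →ₗ[ℝ] g)
    (hanti : ∀ X Y : g, bracket X Y = - bracket Y X)
    (hjacobi : ∀ X Y Z : g,
      bracket X (bracket Y Z) + bracket Y (bracket Z X) + bracket Z (bracket X Y) = 0)
    (z : Submodule ℝ g)
    (hz : ∀ Z : g, Z ∈ z ↔ ∀ Y : g, bracket Z Y = 0)
    (J : g → g →ₗ[ℝ] g)
    (hJdef : ∀ Z ∈ z, ∀ X ∈ zᗮ, ∀ Y ∈ zᗮ, ⟪J Z X, Y⟫ = ⟪Z, bracket X Y⟫)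
    (hJmem : ∀ Z ∈ z, ∀ X ∈ zᗮ, J Z X ∈ zᗮ)
    (hJorth : ∀ Z ∈ z, ‖Z‖ = 1 → ∀ X ∈ zᗮ, ‖J Z X‖ = ‖X‖)
    (hbz : ∀ X ∈ zᗮ, ∀ Y ∈ zᗮ, bracket X Y ∈ z)
    (hspan : ∀ W ∈ z,
      W ∈ Submodule.span ℝ {w : g | ∃ X ∈ zᗮ, ∃ Y ∈ zᗮ, w = bracket X Y}) :
    Even (Module.finrank ℝ zᗮ) ∧ Module.finrank ℝ z + 1 ≤ Module.finrank ℝ zᗮ := by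
  classical
  have hoo : zᗮᗮ = z := Submodule.orthogonal_orthogonal z
  have hdisj : ∀ v : g, v ∈ z → v ∈ zᗮ → v = 0 := fun v h1 h2 =>
    (Submodule.disjoint_def.mp z.orthogonal_disjoint) v h1 h2
  have hzero : ∀ v ∈ zᗮ, (∀ Y ∈ zᗮ, ⟪v, Y⟫ = 0) → v = 0 := by
    intro v hv h
    refine hdisj v ?_ hv
    rw [← hoo]
    exact (Submodule.mem_orthogonal' _ _).mpr h
  have hself : ∀ X : g, bracket X X = 0 := by
    intro X
    have h2 : (2:ℝ) • bracket X X = 0 := by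
      rw [two_smul]; exact add_eq_zero_iff_eq_neg.mpr (hanti X X)
    rcases smul_eq_zero.mp h2 with h | h
    · norm_num at h
    · exact h
  -- additivity of J in Z
  have hJadd : ∀ Z ∈ z, ∀ W ∈ z, ∀ X ∈ zᗮ, J (Z + W) X = J Z X + J W X := by
    intro Z hZ W hW X hX
    have hmem : J (Z + W) X - (J Z X + J W X) ∈ zᗮ :=
      sub_mem (hJmem _ (add_mem hZ hW) _ hX) (add_mem (hJmem _ hZ _ hX) (hJmem _ hW _ hX))
    have h0 : ∀ Y ∈ zᗮ, ⟪J (Z + W) X - (J Z X + J W X), Y⟫ = 0 := by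
      intro Y hY
      rw [inner_sub_left, inner_add_left, hJdef _ (add_mem hZ hW) _ hX _ hY,
        hJdef _ hZ _ hX _ hY, hJdef _ hW _ hX _ hY, inner_add_left]
      ring
    exact sub_eq_zero.mp (hzero _ hmem h0)
  have hJsmul : ∀ Z ∈ z, ∀ c : ℝ, ∀ X ∈ zᗮ, J (c • Z) X = c • J Z X := by
    intro Z hZ c X hX
    have hmem : J (c • Z) X - c • J Z X ∈ zᗮ :=
      sub_mem (hJmem _ (z.smul_mem c hZ) _ hX) (Submodule.smul_mem _ _ (hJmem _ hZ _ hX))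
    have h0 : ∀ Y ∈ zᗮ, ⟪J (c • Z) X - c • J Z X, Y⟫ = 0 := by
      intro Y hY
      rw [inner_sub_left, real_inner_smul_left, hJdef _ (z.smul_mem c hZ) _ hX _ hY,
        hJdef _ hZ _ hX _ hY, real_inner_smul_left]
      ring
    exact sub_eq_zero.mp (hzero _ hmem h0)
  have hJnorm : ∀ Z ∈ z, ∀ X ∈ zᗮ, ‖J Z X‖ = ‖Z‖ * ‖X‖ := by
    intro Z hZ X hX
    by_cases h : Z = 0
    · subst h
      have : J ((0 : ℝ) • (0 : g)) X = (0 : ℝ) • J 0 X := hJsmul 0 z.zero_mem 0 X hX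
      simp only [zero_smul, smul_zero] at this
      simp [this]
    · set c : ℝ := ‖Z‖ with hc
      have hcne : c ≠ 0 := by simpa [hc] using h
      have hZ' : c⁻¹ • Z ∈ z := z.smul_mem _ hZ
      have hn1 : ‖c⁻¹ • Z‖ = 1 := by
        rw [norm_smul, norm_inv, Real.norm_eq_abs, abs_of_nonneg (norm_nonneg Z)]
        field_simp [hc]
      have h1 : ‖J (c⁻¹ • Z) X‖ = ‖X‖ := hJorth _ hZ' hn1 _ hX
      have h2 : J Z X = c • J (c⁻¹ • Z) X := by
        rw [← hJsmul _ hZ' c _ hX, smul_inv_smul₀ hcne]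
      rw [h2, norm_smul, h1, Real.norm_eq_abs, abs_of_nonneg (norm_nonneg Z)]
  -- z is nontrivial
  have hzbot : z ≠ ⊥ := by
    intro hb
    have htop : zᗮ = ⊤ := by rw [hb]; exact Submodule.bot_orthogonal_eq_top
    have : ∀ X : g, X ∈ z := by
      intro X
      rw [hz]
      intro Y
      have : bracket X Y ∈ z :=
        hbz X (htop ▸ Submodule.mem_top) Y (htop ▸ Submodule.mem_top)
      rw [hb] at this
      simpa using this
    have : z = ⊤ := Submodule.eq_top_iff'.mpr this
    rw [hb] at this
    exact bot_ne_top this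
  have hperpbot : zᗮ ≠ ⊥ := by
    intro hb
    apply hzbot
    rw [Submodule.eq_bot_iff]
    intro W hW
    have := hspan W hW
    have hsub : {w : g | ∃ X ∈ zᗮ, ∃ Y ∈ zᗮ, w = bracket X Y} ⊆ {(0 : g)} := by
      rintro w ⟨X, hX, Y, hY, rfl⟩
      rw [hb] at hX
      have : X = 0 := by simpa using hX
      simp [this]
    have := Submodule.span_mono hsub this
    simpa using this
  obtain ⟨Z₀', hZ₀', hZ₀ne⟩ := Submodule.exists_mem_ne_zero_of_ne_bot hzbot
  obtain ⟨X₀', hX₀', hX₀ne⟩ := Submodule.exists_mem_ne_zero_of_ne_bot hperpbot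
  set Z₀ : g := ‖Z₀'‖⁻¹ • Z₀' with hZ₀def
  have hZ₀ : Z₀ ∈ z := z.smul_mem _ hZ₀'
  have hZ₀n : ‖Z₀‖ = 1 := by
    rw [hZ₀def, norm_smul, norm_inv, Real.norm_eq_abs, abs_of_nonneg (norm_nonneg _)]
    exact inv_mul_cancel₀ (norm_ne_zero_iff.mpr hZ₀ne)
  set X₀ : g := ‖X₀'‖⁻¹ • X₀' with hX₀def
  have hX₀ : X₀ ∈ zᗮ := Submodule.smul_mem _ _ hX₀'
  have hX₀n : ‖X₀‖ = 1 := by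
    rw [hX₀def, norm_smul, norm_inv, Real.norm_eq_abs, abs_of_nonneg (norm_nonneg _)]
    exact inv_mul_cancel₀ (norm_ne_zero_iff.mpr hX₀ne)
  -- skewness
  have hskew : ∀ a ∈ zᗮ, ∀ b ∈ zᗮ, ⟪J Z₀ a, b⟫ = -⟪J Z₀ b, a⟫ := by
    intro a ha b hb
    rw [hJdef _ hZ₀ _ ha _ hb, hJdef _ hZ₀ _ hb _ ha, hanti a b, inner_neg_right]
  -- isometry via polarization
  have hiso : ∀ a ∈ zᗮ, ∀ b ∈ zᗮ, ⟪J Z₀ a, J Z₀ b⟫ = ⟪a, b⟫ := by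
    intro a ha b hb
    have hab : a + b ∈ zᗮ := add_mem ha hb
    have h1 : J Z₀ a + J Z₀ b = J Z₀ (a + b) := (map_add _ a b).symm
    rw [real_inner_eq_norm_add_mul_self_sub_norm_mul_self_sub_norm_mul_self_div_two,
      real_inner_eq_norm_add_mul_self_sub_norm_mul_self_sub_norm_mul_self_div_two a b,
      h1, hJorth _ hZ₀ hZ₀n _ hab, hJorth _ hZ₀ hZ₀n _ ha, hJorth _ hZ₀ hZ₀n _ hb]
  have hsq : ∀ x ∈ zᗮ, J Z₀ (J Z₀ x) = -x := by
    intro x hx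
    have hmem : J Z₀ (J Z₀ x) + x ∈ zᗮ := add_mem (hJmem _ hZ₀ _ (hJmem _ hZ₀ _ hx)) hx
    have h0 : ∀ Y ∈ zᗮ, ⟪J Z₀ (J Z₀ x) + x, Y⟫ = 0 := by
      intro Y hY
      rw [inner_add_left, hskew _ (hJmem _ hZ₀ _ hx) _ hY, hiso _ hY _ hx,
        real_inner_comm Y x]
      ring
    exact eq_neg_of_add_eq_zero_left (hzero _ hmem h0)
  constructor
  · -- evenness
    set T : zᗮ →ₗ[ℝ] zᗮ := (J Z₀).restrict (fun x hx => hJmem Z₀ hZ₀ x hx) with hT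
    have hTT : T ∘ₗ T = -LinearMap.id := by
      apply LinearMap.ext
      intro x
      apply Subtype.ext
      show J Z₀ (J Z₀ (x : g)) = -(x : g)
      exact hsq _ x.2
    have hdet := congrArg LinearMap.det hTT
    rw [LinearMap.det_comp] at hdet
    have hneg : (-LinearMap.id : zᗮ →ₗ[ℝ] zᗮ) = (-1 : ℝ) • LinearMap.id :=
      (neg_one_smul ℝ _).symm
    rw [hneg, LinearMap.det_smul, LinearMap.det_id, mul_one] at hdet
    rcases Nat.even_or_odd (Module.finrank ℝ zᗮ) with he | ho
    · exact he
    · exfalso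
      rw [ho.neg_one_pow] at hdet
      nlinarith [mul_self_nonneg (LinearMap.det T)]
  · -- the inequality
    have hJX : ∀ Z ∈ z, J Z X₀ ∈ zᗮ := fun Z hZ => hJmem _ hZ _ hX₀
    set f : (z × ℝ) →ₗ[ℝ] zᗮ :=
      { toFun := fun p => ⟨J (p.1 : g) X₀ + p.2 • X₀,
          add_mem (hJX _ p.1.2) (Submodule.smul_mem _ _ hX₀)⟩
        map_add' := by
          intro p q
          apply Subtype.ext
          show J ((p.1 : g) + (q.1 : g)) X₀ + (p.2 + q.2) • X₀ = _
          rw [hJadd _ p.1.2 _ q.1.2 _ hX₀, add_smul]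
          show _ = (J (p.1 : g) X₀ + p.2 • X₀) + (J (q.1 : g) X₀ + q.2 • X₀)
          abel
        map_smul' := by
          intro c p
          apply Subtype.ext
          show J (c • (p.1 : g)) X₀ + (c * p.2) • X₀ = _
          rw [hJsmul _ p.1.2 c _ hX₀, mul_smul]
          show _ = c • (J (p.1 : g) X₀ + p.2 • X₀)
          rw [smul_add] } with hf
    have hinj : Function.Injective f := by
      rw [← LinearMap.ker_eq_bot, LinearMap.ker_eq_bot']
      intro p hp
      have hpg : J (p.1 : g) X₀ + p.2 • X₀ = 0 := congrArg Subtype.val hp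
      have hinner : ⟪J (p.1 : g) X₀ + p.2 • X₀, X₀⟫ = p.2 := by
        rw [inner_add_left, hJdef _ p.1.2 _ hX₀ _ hX₀, hself, inner_zero_right,
          real_inner_smul_left, real_inner_self_eq_norm_mul_norm, hX₀n]
        ring
      have hp2 : p.2 = 0 := by rw [← hinner, hpg, inner_zero_left]
      have hJ0 : J (p.1 : g) X₀ = 0 := by
        rw [hp2, zero_smul, add_zero] at hpg
        exact hpg
      have hZnorm : ‖(p.1 : g)‖ = 0 := by
        have := hJnorm _ p.1.2 _ hX₀
        rw [hJ0, norm_zero, hX₀n, mul_one] at this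
        exact this.symm
      have hp1 : (p.1 : g) = 0 := norm_eq_zero.mp hZnorm
      exact Prod.ext (Subtype.ext hp1) hp2
    have hle := LinearMap.finrank_le_finrank_of_injective hinj
    rwa [Module.finrank_prod, Module.finrank_self] at hle
end

section
/- For α ∈ ℝ and β ∈ [0, π) with α ≠ 0, Re((α + iβ) coth(α + iβ)) > β cot β, with equality if and only if α = 0 (interpreting β cot β = 1 at β = 0). -/
open Real

-- x * cosh x > sinh x for x > 0
lemma aux_sinh_lt (x : ℝ) (hx : 0 < x) : Real.sinh x < x * Real.cosh x := by
  have h : StrictMonoOn (fun t : ℝ => t * Real.cosh t - Real.sinh t) (Set.Ici 0) := by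
    apply strictMonoOn_of_deriv_pos (convex_Ici 0)
    · fun_prop
    · intro t ht
      simp only [interior_Ici, Set.mem_Ioi] at ht
      have : HasDerivAt (fun t : ℝ => t * Real.cosh t - Real.sinh t) (t * Real.sinh t) t := by
        have h1 : HasDerivAt (fun t : ℝ => t * Real.cosh t)
            (1 * Real.cosh t + t * Real.sinh t) t :=
          (hasDerivAt_id t).mul (Real.hasDerivAt_cosh t)
        have := h1.sub (Real.hasDerivAt_sinh t)
        exact this.congr_deriv (by ring)
      rw [this.deriv]
      exact mul_pos ht (Real.sinh_pos_iff.2 ht)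
  have := h (Set.self_mem_Ici) (Set.mem_Ici.2 hx.le) hx
  simp at this
  linarith

lemma aux_key (x : ℝ) (hx : x ≠ 0) : Real.sinh x ^ 2 < x * (Real.sinh x * Real.cosh x) := by
  rcases hx.lt_or_gt with h | h
  · have := aux_sinh_lt (-x) (by linarith)
    have hs : Real.sinh x < 0 := Real.sinh_neg_iff.2 h
    simp [Real.sinh_neg, Real.cosh_neg] at this
    nlinarith
  · have := aux_sinh_lt x h
    have hs : 0 < Real.sinh x := Real.sinh_pos_iff.2 h
    nlinarith

lemma aux_sin (β : ℝ) (h0 : 0 < β) (hπ : β < Real.pi) : β * Real.cos β < Real.sin β := by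
  rcases lt_or_ge β (Real.pi / 2) with h | h
  · have hc : 0 < Real.cos β := Real.cos_pos_of_mem_Ioo ⟨by linarith [Real.pi_pos], h⟩
    have ht := Real.lt_tan h0 h
    rw [Real.tan_eq_sin_div_cos, lt_div_iff₀ hc] at ht
    linarith
  · have hc : Real.cos β ≤ 0 := Real.cos_nonpos_of_pi_div_two_le_of_le h (by linarith [Real.pi_pos])
    have hs : 0 < Real.sin β := Real.sin_pos_of_pos_of_lt_pi h0 hπ
    nlinarith

lemma aux_re (α β : ℝ) (hα : α ≠ 0) :
    (((α : ℂ) + (β : ℂ) * Complex.I) *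
        (Complex.cosh ((α : ℂ) + (β : ℂ) * Complex.I) /
          Complex.sinh ((α : ℂ) + (β : ℂ) * Complex.I))).re =
      (α * (Real.sinh α * Real.cosh α) + β * (Real.sin β * Real.cos β)) /
        (Real.sinh α ^ 2 + Real.sin β ^ 2) := by
  set s := Real.sinh α with hs
  set c := Real.cosh α with hc
  set sb := Real.sin β with hsb
  set cb := Real.cos β with hcb
  have hsinh : Complex.sinh ((α : ℂ) + (β : ℂ) * Complex.I)
      = ((s * cb : ℝ) : ℂ) + ((c * sb : ℝ) : ℂ) * Complex.I := by
    rw [Complex.sinh_add, Complex.sinh_mul_I, Complex.cosh_mul_I, hs, hc, hsb, hcb]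
    push_cast [← Complex.ofReal_sinh, ← Complex.ofReal_cosh, ← Complex.ofReal_cos,
      ← Complex.ofReal_sin]
    ring
  have hcosh : Complex.cosh ((α : ℂ) + (β : ℂ) * Complex.I)
      = ((c * cb : ℝ) : ℂ) + ((s * sb : ℝ) : ℂ) * Complex.I := by
    rw [Complex.cosh_add, Complex.sinh_mul_I, Complex.cosh_mul_I, hs, hc, hsb, hcb]
    push_cast [← Complex.ofReal_sinh, ← Complex.ofReal_cosh, ← Complex.ofReal_cos,
      ← Complex.ofReal_sin]
    ring
  have hpyth : sb ^ 2 + cb ^ 2 = 1 := Real.sin_sq_add_cos_sq β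
  have hcoshsq : c ^ 2 = s ^ 2 + 1 := by
    have := Real.cosh_sq_sub_sinh_sq α; rw [← hs, ← hc] at this; nlinarith
  have hsne : s ≠ 0 := Real.sinh_ne_zero.2 hα
  have hD : (0:ℝ) < s ^ 2 + sb ^ 2 := by positivity
  have hDen : (s * cb) ^ 2 + (c * sb) ^ 2 = s ^ 2 + sb ^ 2 := by nlinarith
  have hDc : ((s^2+sb^2 : ℝ) : ℂ) ≠ 0 := by
    exact_mod_cast ne_of_gt hD
  have hne : Complex.sinh ((α : ℂ) + (β : ℂ) * Complex.I) ≠ 0 := by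
    rw [hsinh]
    intro h
    rw [Complex.ext_iff] at h
    simp at h
    have hcpos : (0:ℝ) < c := by rw [hc]; exact Real.cosh_pos α
    rcases h with ⟨h1, h2⟩
    have hsb0 : sb = 0 := h2.resolve_left (ne_of_gt hcpos)
    have hcb0 : cb = 0 := h1.resolve_left hsne
    rw [hsb0, hcb0] at hpyth; norm_num at hpyth
  have hdiv : Complex.cosh ((α : ℂ) + (β : ℂ) * Complex.I) /
      Complex.sinh ((α : ℂ) + (β : ℂ) * Complex.I)
      = (((s*c : ℝ) : ℂ) - ((sb*cb : ℝ) : ℂ) * Complex.I) / ((s^2+sb^2 : ℝ) : ℂ) := by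
    rw [div_eq_div_iff hne hDc, hsinh, hcosh]
    push_cast
    have hp : (sb:ℂ)^2 + (cb:ℂ)^2 = 1 := by exact_mod_cast hpyth
    have hq : (c:ℂ)^2 = (s:ℂ)^2 + 1 := by exact_mod_cast hcoshsq
    have hI : Complex.I ^ 2 = -1 := Complex.I_sq
    linear_combination ((c:ℂ) * (cb:ℂ) * (sb:ℂ)^2) * hI
      + (Complex.I * (s:ℂ) * (sb:ℂ)) * hp - (Complex.I * (s:ℂ) * (sb:ℂ)) * hq
  rw [hdiv]
  have hmul : ((α : ℂ) + (β : ℂ) * Complex.I) *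
      ((((s*c : ℝ) : ℂ) - ((sb*cb : ℝ) : ℂ) * Complex.I) / ((s^2+sb^2 : ℝ) : ℂ))
      = (((α*(s*c)+β*(sb*cb))/(s^2+sb^2) : ℝ) : ℂ)
        + (((β*(s*c)-α*(sb*cb))/(s^2+sb^2) : ℝ) : ℂ) * Complex.I := by
    have hDc2 : ((s:ℂ)^2 + (sb:ℂ)^2) ≠ 0 := by push_cast at hDc; exact hDc
    push_cast
    have hI : Complex.I ^ 2 = -1 := Complex.I_sq
    field_simp
    ring_nf
    linear_combination (-((β:ℂ) * (sb:ℂ) * (cb:ℂ))) * hI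
  rw [hmul]
  simp only [Complex.add_re, Complex.mul_re, Complex.ofReal_re, Complex.ofReal_im,
    Complex.I_re, Complex.I_im, mul_zero, zero_mul, mul_one, sub_zero, add_zero]

/-- For `α ≠ 0` and `β ∈ [0, π)`,
`Re((α + iβ) coth(α + iβ)) > β cot β` (interpreting `β cot β = 1` at `β = 0`). -/
theorem stmt11 (α β : ℝ) (hβ : β ∈ Set.Ico (0:ℝ) Real.pi) (hα : α ≠ 0) :
    (if β = 0 then (1:ℝ) else β * Real.cot β) <
      (((α : ℂ) + (β : ℂ) * Complex.I) *
        (Complex.cosh ((α : ℂ) + (β : ℂ) * Complex.I) /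
          Complex.sinh ((α : ℂ) + (β : ℂ) * Complex.I))).re := by
  rw [aux_re α β hα]
  have hkey := aux_key α hα
  have hs2 : 0 < Real.sinh α ^ 2 := by
    have := Real.sinh_ne_zero.2 hα
    positivity
  by_cases hb0 : β = 0
  · subst hb0
    simp only [if_pos rfl, Real.sin_zero, Real.cos_zero]
    rw [lt_div_iff₀ (by simpa using hs2)]
    simpa using hkey
  · rw [if_neg hb0]
    have h0 : 0 < β := lt_of_le_of_ne hβ.1 (Ne.symm hb0)
    have hsb : 0 < Real.sin β := Real.sin_pos_of_pos_of_lt_pi h0 hβ.2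
    have hsin := aux_sin β h0 hβ.2
    rw [Real.cot_eq_cos_div_sin, ← mul_div_assoc, div_lt_div_iff₀ hsb (by positivity)]
    nlinarith [mul_pos hs2 hsb, mul_lt_mul_of_pos_left hsin hs2]
end

section
/- For a, b ∈ ℝ^m, let (a+bi)² denote the complex bilinear square a·a - b·b + 2i a·b, and let √ denote the branch of square root with nonnegative imaginary part. Then |a| - |b| ≤ |Re √((a+bi)²)| ≤ |a| and 0 ≤ Im √((a+bi)²) ≤ |b|, with equality in the upper bounds if and only if a and b are parallel. -/
open scoped RealInnerProductSpace

/-- The bilinear square `(a+bi)² = |a|² - |b|² + 2i a·b` of `a, b ∈ ℝᵐ`. -/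
noncomputable def bilinSq {m : ℕ} (a b : EuclideanSpace ℝ (Fin m)) : ℂ :=
  ((‖a‖ ^ 2 - ‖b‖ ^ 2 : ℝ) : ℂ) + ((2 * ⟪a, b⟫ : ℝ) : ℂ) * Complex.I

/-- The branch of the square root with nonnegative imaginary part and `√w > 0` for
`w > 0` (branch cut on the positive real axis): it agrees with the principal square
root when `Im w ≥ 0` and is its negative when `Im w < 0`. -/
noncomputable def sqrtBranch (w : ℂ) : ℂ :=
  if 0 ≤ w.im then w ^ ((1 : ℂ) / 2) else -(w ^ ((1 : ℂ) / 2))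

lemma sqrtBranch_sq (w : ℂ) : (sqrtBranch w) ^ 2 = w := by
  have h : (w ^ ((1:ℂ)/2)) ^ 2 = w := by
    have := Complex.cpow_nat_inv_pow w (n := 2) (by norm_num)
    simpa [one_div] using this
  unfold sqrtBranch
  split <;> simp [neg_pow, h]

lemma cpow_half_im (w : ℂ) (hw : w ≠ 0) :
    (w ^ ((1:ℂ)/2)).im = Real.exp ((Complex.log w).re / 2) * Real.sin (Complex.arg w / 2) := by
  rw [Complex.cpow_def_of_ne_zero hw, Complex.exp_im]
  congr 1
  · congr 1
    simp [Complex.mul_re, Complex.log_im]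
    ring
  · congr 1
    simp [Complex.mul_im, Complex.log_im]
    ring

lemma sqrtBranch_im_nonneg (w : ℂ) : 0 ≤ (sqrtBranch w).im := by
  by_cases hw : w = 0
  · simp [sqrtBranch, hw, Complex.zero_cpow (by norm_num : (1:ℂ)/2 ≠ 0)]
  unfold sqrtBranch
  have hpi := Real.pi_pos
  split_ifs with h
  · rw [cpow_half_im w hw]
    have h1 : 0 ≤ Complex.arg w := Complex.arg_nonneg_iff.2 h
    have h2 : Complex.arg w ≤ Real.pi := Complex.arg_le_pi w
    exact mul_nonneg (Real.exp_nonneg _)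
      (Real.sin_nonneg_of_nonneg_of_le_pi (by linarith) (by linarith))
  · rw [Complex.neg_im, cpow_half_im w hw]
    push_neg at h
    have h1 : Complex.arg w < 0 := Complex.arg_neg_iff.2 h
    have h2 : -Real.pi < Complex.arg w := Complex.neg_pi_lt_arg w
    have : Real.sin (Complex.arg w / 2) ≤ 0 :=
      Real.sin_nonpos_of_nonpos_of_neg_pi_le (by linarith) (by linarith)
    nlinarith [Real.exp_nonneg ((Complex.log w).re / 2)]


lemma key_ineq (x y A B : ℝ) (hre : x ^ 2 - y ^ 2 = A ^ 2 - B ^ 2)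
    (hcs : (x * y) ^ 2 ≤ A ^ 2 * B ^ 2) : x ^ 2 ≤ A ^ 2 ∧ y ^ 2 ≤ B ^ 2 := by
  constructor
  · nlinarith [sq_nonneg x, sq_nonneg y, sq_nonneg A, sq_nonneg B, sq_nonneg (x*y)]
  · nlinarith [sq_nonneg x, sq_nonneg y, sq_nonneg A, sq_nonneg B, sq_nonneg (x*y)]

lemma key_eq (x y A B : ℝ) (hre : x ^ 2 - y ^ 2 = A ^ 2 - B ^ 2)
    (hp : (x * y) ^ 2 = A ^ 2 * B ^ 2) : x ^ 2 = A ^ 2 ∧ y ^ 2 = B ^ 2 := by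
  obtain ⟨h1, h2⟩ := key_ineq x y A B hre (le_of_eq hp)
  constructor
  · nlinarith [sq_nonneg x, sq_nonneg y]
  · nlinarith [sq_nonneg x, sq_nonneg y]

theorem stmt12 (m : ℕ) (a b : EuclideanSpace ℝ (Fin m)) :
    ‖a‖ - ‖b‖ ≤ |(sqrtBranch (bilinSq a b)).re| ∧
    |(sqrtBranch (bilinSq a b)).re| ≤ ‖a‖ ∧
    0 ≤ (sqrtBranch (bilinSq a b)).im ∧
    (sqrtBranch (bilinSq a b)).im ≤ ‖b‖ ∧
    ((|(sqrtBranch (bilinSq a b)).re| = ‖a‖ ∧ (sqrtBranch (bilinSq a b)).im = ‖b‖)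
      ↔ ∃ r : ℝ, a = r • b ∨ b = r • a) := by
  set s := sqrtBranch (bilinSq a b) with hs
  have hy0 : 0 ≤ s.im := sqrtBranch_im_nonneg _
  have hsq := sqrtBranch_sq (bilinSq a b)
  rw [← hs] at hsq
  have hre : s.re ^ 2 - s.im ^ 2 = ‖a‖ ^ 2 - ‖b‖ ^ 2 := by
    have h := congrArg Complex.re hsq
    simp only [bilinSq, pow_two, Complex.mul_re, Complex.add_re, Complex.mul_im,
      Complex.I_re, Complex.I_im, Complex.ofReal_re, Complex.ofReal_im] at h
    nlinarith [h]
  have him : s.re * s.im = ⟪a, b⟫ := by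
    have h := congrArg Complex.im hsq
    simp only [bilinSq, pow_two, Complex.mul_re, Complex.add_im, Complex.mul_im,
      Complex.I_re, Complex.I_im, Complex.ofReal_re, Complex.ofReal_im] at h
    nlinarith [h]
  have hcs : (s.re * s.im) ^ 2 ≤ ‖a‖ ^ 2 * ‖b‖ ^ 2 := by
    have h := abs_real_inner_le_norm a b
    rw [him]
    nlinarith [abs_nonneg (⟪a, b⟫ : ℝ), sq_abs (⟪a, b⟫ : ℝ)]
  obtain ⟨hx2, hy2⟩ := key_ineq s.re s.im ‖a‖ ‖b‖ hre hcs
  have hxA : |s.re| ≤ ‖a‖ := by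
    nlinarith [sq_abs s.re, abs_nonneg s.re, norm_nonneg a]
  have hyB : s.im ≤ ‖b‖ := by nlinarith [norm_nonneg b]
  have hlow : ‖a‖ - ‖b‖ ≤ |s.re| := by
    nlinarith [sq_abs s.re, abs_nonneg s.re, norm_nonneg a, norm_nonneg b, sq_nonneg s.im]
  refine ⟨hlow, hxA, hy0, hyB, ?_, ?_⟩
  · rintro ⟨h1, h2⟩
    have hx2' : s.re ^ 2 = ‖a‖ ^ 2 := by rw [← sq_abs s.re, h1]
    have hy2' : s.im ^ 2 = ‖b‖ ^ 2 := by rw [← h2]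
    have hip2 : (⟪a, b⟫ : ℝ) ^ 2 = (‖a‖ * ‖b‖) ^ 2 := by
      rw [← him]; nlinarith [hx2', hy2']
    by_cases hb : b = 0
    · exact ⟨0, Or.inr (by simp [hb])⟩
    by_cases ha : a = 0
    · exact ⟨0, Or.inl (by simp [ha])⟩
    have hBne : ‖b‖ ≠ 0 := norm_ne_zero_iff.2 hb
    have habs : |(⟪a, b⟫ : ℝ)| = ‖a‖ * ‖b‖ := by
      rw [← Real.sqrt_sq_eq_abs, hip2, Real.sqrt_sq (by positivity)]
    rcases abs_eq (by positivity : (0:ℝ) ≤ ‖a‖ * ‖b‖) |>.1 habs with hp | hn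
    · have heq : ‖b‖ • a = ‖a‖ • b := inner_eq_norm_mul_iff_real.1 hp
      refine ⟨‖b‖⁻¹ * ‖a‖, Or.inl ?_⟩
      have := congrArg (fun v => (‖b‖)⁻¹ • v) heq
      simpa [smul_smul, inv_mul_cancel₀ hBne] using this
    · have hp' : (⟪a, -b⟫ : ℝ) = ‖a‖ * ‖-b‖ := by
        rw [inner_neg_right, norm_neg, hn]; ring
      have heq : ‖-b‖ • a = ‖a‖ • (-b) := inner_eq_norm_mul_iff_real.1 hp'
      rw [norm_neg, smul_neg] at heq
      refine ⟨-(‖b‖⁻¹ * ‖a‖), Or.inl ?_⟩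
      have h3 := congrArg (fun v => (‖b‖)⁻¹ • v) heq
      simp only [smul_smul, smul_neg] at h3
      rw [inv_mul_cancel₀ hBne, one_smul] at h3
      rw [← neg_smul] at h3
      exact h3
  · rintro ⟨r, h | h⟩
    · have hA : ‖a‖ = |r| * ‖b‖ := by rw [h, norm_smul, Real.norm_eq_abs]
      have hip : (⟪a, b⟫ : ℝ) = r * ‖b‖ ^ 2 := by
        rw [h, real_inner_smul_left, real_inner_self_eq_norm_sq]
      have hp : (s.re * s.im) ^ 2 = ‖a‖ ^ 2 * ‖b‖ ^ 2 := by
        rw [him, hip, hA, mul_pow, mul_pow, sq_abs]; ring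
      obtain ⟨hx2', hy2'⟩ := key_eq s.re s.im ‖a‖ ‖b‖ hre hp
      constructor
      · rw [← Real.sqrt_sq_eq_abs, hx2', Real.sqrt_sq (norm_nonneg a)]
      · rw [← Real.sqrt_sq hy0, hy2', Real.sqrt_sq (norm_nonneg b)]
    · have hA : ‖b‖ = |r| * ‖a‖ := by rw [h, norm_smul, Real.norm_eq_abs]
      have hip : (⟪a, b⟫ : ℝ) = r * ‖a‖ ^ 2 := by
        rw [h, real_inner_smul_right, real_inner_self_eq_norm_sq]
      have hp : (s.re * s.im) ^ 2 = ‖a‖ ^ 2 * ‖b‖ ^ 2 := by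
        rw [him, hip, hA, mul_pow, mul_pow, sq_abs]; ring
      obtain ⟨hx2', hy2'⟩ := key_eq s.re s.im ‖a‖ ‖b‖ hre hp
      constructor
      · rw [← Real.sqrt_sq_eq_abs, hx2', Real.sqrt_sq (norm_nonneg a)]
      · rw [← Real.sqrt_sq hy0, hy2', Real.sqrt_sq (norm_nonneg b)]
end

section
/- Define F(θ) = θ²/(θ - sin θ cos θ) for θ > π/2 (removing removable singularities). If π/2 < θ₁ < π < θ₂, then F(θ₁) < F(θ₂). In particular F is strictly increasing on (π/2, π), F(π) = π, and F(θ) > π for all θ > π. -/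
open Real Set

/-- `F(θ) = θ²/(θ - sin θ cos θ)`. -/
noncomputable def F (θ : ℝ) : ℝ := θ ^ 2 / (θ - Real.sin θ * Real.cos θ)

lemma D_pos {θ : ℝ} (h : 1 < θ) : 0 < θ - Real.sin θ * Real.cos θ := by
  nlinarith [Real.sin_sq_add_cos_sq θ, sq_nonneg (Real.sin θ - Real.cos θ)]

lemma hasDerivAt_D (θ : ℝ) :
    HasDerivAt (fun x => x - Real.sin x * Real.cos x)
      (1 - (Real.cos θ * Real.cos θ + Real.sin θ * (-Real.sin θ))) θ :=
  (hasDerivAt_id θ).sub ((Real.hasDerivAt_sin θ).mul (Real.hasDerivAt_cos θ))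

lemma hasDerivAt_F {θ : ℝ} (h : 1 < θ) :
    HasDerivAt F ((2 * θ * (θ - Real.sin θ * Real.cos θ) -
      θ ^ 2 * (1 - (Real.cos θ * Real.cos θ + Real.sin θ * (-Real.sin θ)))) /
      (θ - Real.sin θ * Real.cos θ) ^ 2) θ := by
  have h1 : HasDerivAt (fun x : ℝ => x ^ 2) (2 * θ) θ := by
    simpa using hasDerivAt_pow 2 θ
  exact h1.div (hasDerivAt_D θ) (D_pos h).ne'

lemma F_mono : StrictMonoOn F (Set.Ioc (Real.pi / 2) Real.pi) := by
  have hpi := Real.pi_gt_three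
  apply strictMonoOn_of_deriv_pos (convex_Ioc _ _)
  · apply ContinuousOn.div (by fun_prop) (by fun_prop)
    intro x hx
    exact (D_pos (by simp only [mem_Ioc] at hx; linarith [hx.1])).ne'
  · intro x hx
    rw [interior_Ioc] at hx
    obtain ⟨hx1, hx2⟩ := hx
    have hx0 : 1 < x := by linarith
    rw [(hasDerivAt_F hx0).deriv]
    have hc : Real.cos x < 0 := Real.cos_neg_of_pi_div_two_lt_of_lt hx1 (by linarith)
    have hs : 0 < Real.sin x := Real.sin_pos_of_pos_of_lt_pi (by linarith) hx2
    apply div_pos _ (pow_pos (D_pos hx0) 2)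
    nlinarith [mul_pos (neg_pos.2 hc) (sub_pos.2 (show x * Real.cos x < Real.sin x by nlinarith)), Real.sin_sq_add_cos_sq x]

lemma F_pi : F Real.pi = Real.pi := by
  have : Real.pi ≠ 0 := Real.pi_ne_zero
  simp [F, Real.sin_pi]
  field_simp

lemma g_mono : StrictMonoOn
    (fun x : ℝ => x ^ 2 - Real.pi * x + Real.pi * (Real.sin x * Real.cos x))
    (Set.Ici Real.pi) := by
  apply strictMonoOn_of_deriv_pos (convex_Ici _) (by fun_prop)
  intro x hx
  rw [interior_Ici] at hx
  have hd : HasDerivAt (fun x : ℝ => x ^ 2 - Real.pi * x + Real.pi * (Real.sin x * Real.cos x))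
      (2 * x - Real.pi + Real.pi * (Real.cos x * Real.cos x + Real.sin x * (-Real.sin x))) x := by
    have h1 : HasDerivAt (fun x : ℝ => x ^ 2) (2 * x) x := by simpa using hasDerivAt_pow 2 x
    exact (h1.sub ((hasDerivAt_id x).const_mul Real.pi)).add
      (((Real.hasDerivAt_sin x).mul (Real.hasDerivAt_cos x)).const_mul Real.pi) |>.congr_deriv (by ring)
  rw [hd.deriv]
  have := Real.pi_pos
  nlinarith [Real.sin_sq_add_cos_sq x, Real.neg_one_le_cos (2*x), Real.cos_sq x,
    sq_nonneg (Real.sin x), Real.cos_sq_le_one x, Real.sin_sq_le_one x, mem_Ioi.1 hx]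

theorem stmt17 :
    (∀ θ₁ θ₂ : ℝ, Real.pi / 2 < θ₁ → θ₁ < Real.pi → Real.pi < θ₂ → F θ₁ < F θ₂) ∧
    StrictMonoOn F (Set.Ioo (Real.pi / 2) Real.pi) ∧
    F Real.pi = Real.pi ∧
    (∀ θ : ℝ, Real.pi < θ → Real.pi < F θ) := by
  have hpi := Real.pi_gt_three
  have hgt : ∀ θ : ℝ, Real.pi < θ → Real.pi < F θ := by
    intro θ hθ
    have hg := g_mono (mem_Ici.2 le_rfl) (mem_Ici.2 hθ.le) hθ
    simp only [Real.sin_pi, zero_mul, mul_zero, add_zero] at hg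
    have hD : 0 < θ - Real.sin θ * Real.cos θ := D_pos (by linarith)
    rw [F, lt_div_iff₀ hD]
    nlinarith
  refine ⟨fun θ₁ θ₂ h1 h2 h3 => ?_, F_mono.mono Ioo_subset_Ioc_self, F_pi, hgt⟩
  have := F_mono (mem_Ioc.2 ⟨h1, h2.le⟩) (mem_Ioc.2 ⟨by linarith, le_rfl⟩) h2
  calc F θ₁ < F Real.pi := this
    _ = Real.pi := F_pi
    _ < F θ₂ := hgt θ₂ h3
end

section
/- Define ν(θ) = (θ - sin θ cos θ)/sin²θ for θ not a multiple of π. For every y ∈ [0, π/2], the equation ν(θ) = y has exactly one solution θ in [0, ∞) (with ν(0) := 0), and that solution lies in [0, π). -/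
open Real Set Filter

/-- `ν(θ) = (θ - sin θ cos θ)/sin²θ` (with `ν(0) = 0`; the Lean formula gives `0`
at `θ = 0`, matching the stated convention). -/
noncomputable def nu (θ : ℝ) : ℝ := (θ - Real.sin θ * Real.cos θ) / (Real.sin θ) ^ 2

lemma num_pos {θ : ℝ} (h1 : 0 < θ) : 0 < θ - Real.sin θ * Real.cos θ := by
  have h := Real.sin_lt (by linarith : (0:ℝ) < 2 * θ)
  have h2 : Real.sin (2 * θ) = 2 * Real.sin θ * Real.cos θ := Real.sin_two_mul θ
  linarith

lemma key_pos {θ : ℝ} (h1 : 0 < θ) (h2 : θ < Real.pi) :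
    0 < Real.sin θ - θ * Real.cos θ := by
  have hs : 0 < Real.sin θ := Real.sin_pos_of_pos_of_lt_pi h1 h2
  rcases le_or_gt (Real.pi / 2) θ with h | h
  · have hc : Real.cos θ ≤ 0 := Real.cos_nonpos_of_pi_div_two_le_of_le h (by linarith)
    nlinarith
  · have hc : 0 < Real.cos θ := Real.cos_pos_of_mem_Ioo ⟨by linarith, h⟩
    have ht := Real.lt_tan h1 h
    rw [Real.tan_eq_sin_div_cos, lt_div_iff₀ hc] at ht
    linarith

lemma nu_hasDerivAt {θ : ℝ} (hs : Real.sin θ ≠ 0) :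
    HasDerivAt nu (2 * Real.sin θ * (Real.sin θ - θ * Real.cos θ) / (Real.sin θ) ^ 4) θ := by
  have h1 : HasDerivAt (fun t : ℝ => t - Real.sin t * Real.cos t) (2 * Real.sin θ ^ 2) θ := by
    have h := (hasDerivAt_id θ).sub ((Real.hasDerivAt_sin θ).mul (Real.hasDerivAt_cos θ))
    refine h.congr_deriv ?_
    have hp := Real.sin_sq_add_cos_sq θ
    nlinarith [hp]
  have h2 : HasDerivAt (fun t : ℝ => (Real.sin t) ^ 2) (2 * Real.sin θ * Real.cos θ) θ := by
    have h := (Real.hasDerivAt_sin θ).pow 2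
    refine h.congr_deriv ?_; ring
  have hden : (Real.sin θ) ^ 2 ≠ 0 := pow_ne_zero _ hs
  have h := h1.div h2 hden
  refine h.congr_deriv ?_
  rw [show ((Real.sin θ ^ 2) ^ 2 : ℝ) = Real.sin θ ^ 4 by ring]
  congr 1
  linear_combination (2 * Real.sin θ ^ 2) * Real.sin_sq_add_cos_sq θ

lemma nu_contOn : ContinuousOn nu (Set.Ico 0 Real.pi) := by
  intro x hx
  rcases eq_or_lt_of_le hx.1 with h0 | h0
  · -- continuity at 0 by squeeze: 0 ≤ nu θ ≤ tan θ near 0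
    subst h0
    rw [ContinuousWithinAt]
    have hnu0 : nu 0 = 0 := by simp [nu]
    rw [hnu0]
    have htan : Filter.Tendsto Real.tan (nhdsWithin 0 (Set.Ico 0 Real.pi)) (nhds 0) := by
      have : ContinuousAt Real.tan 0 := Real.continuousAt_tan.2 (by simp)
      simpa [Real.tan_zero] using this.continuousWithinAt.tendsto
    have hev : ∀ᶠ θ in nhdsWithin 0 (Set.Ico 0 Real.pi),
        θ ∈ Set.Ico 0 Real.pi ∧ θ < Real.pi / 2 := by
      filter_upwards [self_mem_nhdsWithin,
        eventually_nhdsWithin_of_eventually_nhds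
          (eventually_lt_nhds (by positivity : (0:ℝ) < Real.pi / 2))] with θ h1 h2
      exact ⟨h1, h2⟩
    refine tendsto_of_tendsto_of_tendsto_of_le_of_le' tendsto_const_nhds htan ?_ ?_
    · filter_upwards [hev] with θ ⟨hθ, _⟩
      rcases eq_or_lt_of_le hθ.1 with h | h
      · simp [nu, ← h]
      · have hs : 0 < Real.sin θ := Real.sin_pos_of_pos_of_lt_pi h hθ.2
        rw [nu]
        exact (div_pos (num_pos h) (by positivity)).le
    · filter_upwards [hev] with θ ⟨hθ, hlt⟩
      rcases eq_or_lt_of_le hθ.1 with h | h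
      · simp [nu, ← h]
      · have hs : 0 < Real.sin θ := Real.sin_pos_of_pos_of_lt_pi h hθ.2
        have hc : 0 < Real.cos θ := Real.cos_pos_of_mem_Ioo ⟨by linarith, hlt⟩
        have ht : θ < Real.tan θ := Real.lt_tan h hlt
        have htan : Real.tan θ * Real.cos θ = Real.sin θ := by
          rw [Real.tan_eq_sin_div_cos]; field_simp
        rw [nu, div_le_iff₀ (by positivity)]
        nlinarith [Real.sin_sq_add_cos_sq θ]
  · have hs : Real.sin x ≠ 0 := ne_of_gt (Real.sin_pos_of_pos_of_lt_pi h0 hx.2)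
    exact (nu_hasDerivAt hs).continuousAt.continuousWithinAt

lemma nu_strictMonoOn : StrictMonoOn nu (Set.Ico 0 Real.pi) := by
  refine strictMonoOn_of_deriv_pos (convex_Ico _ _) nu_contOn ?_
  intro x hx
  rw [interior_Ico] at hx
  have hs : 0 < Real.sin x := Real.sin_pos_of_pos_of_lt_pi hx.1 hx.2
  rw [(nu_hasDerivAt (ne_of_gt hs)).deriv]
  have := key_pos hx.1 hx.2
  positivity

/-- For every `y ∈ [0, π/2]`, the equation `ν(θ) = y` has exactly one solution
`θ ∈ [0, ∞)` (excluding positive multiples of `π`, where `ν` is undefined), and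
that solution lies in `[0, π)`. -/
theorem stmt18 :
    ∀ y ∈ Set.Icc (0:ℝ) (Real.pi / 2),
      ∃ θ ∈ Set.Ico (0:ℝ) Real.pi, nu θ = y ∧
        ∀ θ' : ℝ, 0 ≤ θ' → (θ' = 0 ∨ ∀ k : ℕ, θ' ≠ k * Real.pi) →
          nu θ' = y → θ' = θ := by
  intro y hy
  have hpi : (0:ℝ) < Real.pi := Real.pi_pos
  have hnu0 : nu 0 = 0 := by simp [nu]
  have hnuhalf : nu (Real.pi / 2) = Real.pi / 2 := by
    simp [nu, Real.sin_pi_div_two, Real.cos_pi_div_two]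
  -- existence via IVT on [0, π/2]
  have hsub : Set.Icc (0:ℝ) (Real.pi / 2) ⊆ Set.Ico 0 Real.pi := fun t ht =>
    ⟨ht.1, lt_of_le_of_lt ht.2 (by linarith)⟩
  have hivt := intermediate_value_Icc (by positivity : (0:ℝ) ≤ Real.pi / 2)
    (nu_contOn.mono hsub)
  rw [hnu0, hnuhalf] at hivt
  obtain ⟨θ, hθmem, hθ⟩ := hivt hy
  have hθIco : θ ∈ Set.Ico (0:ℝ) Real.pi := hsub hθmem
  refine ⟨θ, hθIco, hθ, ?_⟩
  intro θ' hθ'0 hcond hθ'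
  -- first show θ' < π
  have hθ'lt : θ' < Real.pi := by
    by_contra hge
    push_neg at hge
    have hne0 : θ' ≠ 0 := by intro h; rw [h] at hge; linarith
    have hk : ∀ k : ℕ, θ' ≠ k * Real.pi := hcond.resolve_left hne0
    have hs : Real.sin θ' ≠ 0 := by
      intro h
      obtain ⟨n, hn⟩ := Real.sin_eq_zero_iff.1 h
      have hn0 : 0 ≤ n := by
        by_contra hneg
        push_neg at hneg
        have : (n:ℝ) ≤ -1 := by exact_mod_cast Int.le_sub_one_of_lt hneg
        nlinarith
      refine hk n.toNat ?_
      have hcast : ((n.toNat : ℕ) : ℝ) = (n : ℝ) := by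
        exact_mod_cast Int.toNat_of_nonneg hn0
      rw [hcast, ← hn]
    -- nu θ' ≥ θ' - 1/2 > π/2 ≥ y : contradiction
    have hden : 0 < (Real.sin θ') ^ 2 := by positivity
    have hden1 : (Real.sin θ') ^ 2 ≤ 1 := by
      nlinarith [Real.neg_one_le_sin θ', Real.sin_le_one θ']
    have hsc : Real.sin θ' * Real.cos θ' ≤ 1 / 2 := by
      have := Real.sin_le_one (2 * θ')
      have h2 := Real.sin_two_mul θ'
      linarith
    have hnum : Real.pi - 1/2 ≤ θ' - Real.sin θ' * Real.cos θ' := by linarith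
    have hbig : Real.pi - 1/2 ≤ nu θ' := by
      have h3 := Real.pi_gt_three
      rw [nu, le_div_iff₀ hden]
      nlinarith [mul_nonneg (by linarith : (0:ℝ) ≤ Real.pi - 1/2)
        (by linarith : (0:ℝ) ≤ 1 - Real.sin θ' ^ 2)]
    have : y ≤ Real.pi / 2 := hy.2
    rw [← hθ'] at this
    have h3 := Real.pi_gt_three
    linarith
  have hθ'Ico : θ' ∈ Set.Ico (0:ℝ) Real.pi := ⟨hθ'0, hθ'lt⟩
  exact nu_strictMonoOn.injOn hθ'Ico hθIco (by rw [hθ, hθ'])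
end
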